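/- Let u_h solve the discrete Hamilton–Jacobi equation with initial datum u^0. Then the time derivative is controlled by the discrete Hamiltonian of the initial datum: for every x ∈ Ω_h and every t ≥ 0, |∂_t u_h(x,t)| ≤ max_{y ∈ Ω_h} |(H_h u^0)(y)|. -/

import Mathlib

open scoped Classical BigOperators
open MeasureTheory

noncomputable section

/-- Shift a grid point `x` by the integer vector `ν` scaled by `h`. -/
def shiftPt {N : ℕ} (h : ℝ) (x : Fin N → ℝ) (ν : Fin N → ℤ) : Fin N → ℝ :=
  fun k => x k + (ν k : ℝ) * h

/-- The state-constrained discrete Hamiltonian `H_h`. -/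
def discHam {N M : ℕ} (h : ℝ) (Ωh : Finset (Fin N → ℝ)) (ν : Fin M → Fin N → ℤ)
    (Φp Φm : Fin M → (Fin N → ℝ) → ℝ) (u : (Fin N → ℝ) → ℝ) (x : Fin N → ℝ) : ℝ :=
  ∑ j : Fin M,
    ((if shiftPt h x (ν j) ∈ Ωh then
        Φp j x * (Real.exp ((u (shiftPt h x (ν j)) - u x) / h) - 1) else 0)
      + (if shiftPt h x (-(ν j)) ∈ Ωh then
        Φm j x * (Real.exp ((u (shiftPt h x (-(ν j))) - u x) / h) - 1) else 0))

/-- `u` is a global classical solution on `[0,∞)` of the state-constrained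
discrete Hamilton–Jacobi equation `∂ₜ u = H_h u` on `Ω_h` with initial datum `u0`:
for every grid point, the time slice is continuously differentiable on `[0,∞)`
(the derivative `H_h u(·,t)` depends continuously on `t`) and the equation holds. -/
def solvesDHJ {N M : ℕ} (h : ℝ) (Ωh : Finset (Fin N → ℝ)) (ν : Fin M → Fin N → ℤ)
    (Φp Φm : Fin M → (Fin N → ℝ) → ℝ)
    (u0 : (Fin N → ℝ) → ℝ) (u : (Fin N → ℝ) → ℝ → ℝ) : Prop :=
  (∀ x ∈ Ωh, u x 0 = u0 x) ∧
  (∀ x ∈ Ωh, ∀ t ∈ Set.Ici (0:ℝ),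
    HasDerivWithinAt (fun s => u x s)
      (discHam h Ωh ν Φp Φm (fun y => u y t) x) (Set.Ici 0) t) ∧
  (∀ x ∈ Ωh,
    ContinuousOn (fun t => discHam h Ωh ν Φp Φm (fun y => u y t) x) (Set.Ici 0))

section MaxPrinciple

open Filter Set Topology

/-- Discrete maximum principle: if at every time a maximizer of a finite family of
differentiable functions has nonpositive derivative, then the pointwise maximum
is bounded by its initial value. -/
lemma maxPrinciple_aux {ι : Type*} (s : Finset ι) (hs : s.Nonempty)
    (f f' : ι → ℝ → ℝ)
    (hderiv : ∀ i ∈ s, ∀ t ∈ Set.Ici (0:ℝ), HasDerivWithinAt (f i) (f' i t) (Set.Ici 0) t)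
    (hsign : ∀ t ∈ Set.Ici (0:ℝ), ∀ i ∈ s, (∀ j ∈ s, f j t ≤ f i t) → f' i t ≤ 0) :
    ∀ t ∈ Set.Ici (0:ℝ), s.sup' hs (fun i => f i t) ≤ s.sup' hs (fun i => f i 0) := by
  intro T hT
  set Mx : ℝ → ℝ := fun t => s.sup' hs (fun i => f i t) with hMx
  have hc : ∀ i ∈ s, ContinuousOn (f i) (Set.Ici 0) := fun i hi t ht =>
    (hderiv i hi t ht).continuousWithinAt
  have hMc : ContinuousOn Mx (Set.Ici 0) := by
    intro t ht
    exact Filter.Tendsto.finset_sup'_nhds_apply hs (fun i hi => hc i hi t ht)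
  -- main estimate for every ε > 0
  have key : ∀ ε > 0, Mx T ≤ Mx 0 + ε * T := by
    intro ε hε
    have H := image_le_of_liminf_slope_right_lt_deriv_boundary' (f := Mx)
      (f' := fun _ => 0) (a := 0) (b := T) (B := fun t => Mx 0 + ε * t) (B' := fun _ => ε)
      (hMc.mono (Set.Icc_subset_Ici_self))
      ?_ (by simp) ?_ ?_ ?_ (Set.right_mem_Icc.2 hT)
    · exact H
    · -- liminf slope condition
      intro x hx r hr
      have hx0 : (0:ℝ) ≤ x := hx.1
      have hIoi : Set.Ioi x ⊆ Set.Ici (0:ℝ) \ {x} := by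
        intro z hz
        exact ⟨le_trans hx0 (le_of_lt hz), ne_of_gt hz⟩
      have hmono : 𝓝[>] x ≤ 𝓝[Set.Ici (0:ℝ) \ {x}] x := nhdsWithin_mono x hIoi
      -- for each i, eventually the generalized slope is < r
      have hev : ∀ i ∈ s, ∀ᶠ z in 𝓝[>] x, (f i z - Mx x) / (z - x) < r := by
        intro i hi
        have hslope : Tendsto (slope (f i) x) (𝓝[>] x) (𝓝 (f' i x)) :=
          ((hasDerivWithinAt_iff_tendsto_slope).1 (hderiv i hi x hx0)).mono_left hmono
        rcases eq_or_lt_of_le (Finset.le_sup' (fun j => f j x) hi) with heq | hlt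
        · -- maximizer : f i x = Mx x
          have heq' : Mx x = f i x := heq.symm
          have hmax : ∀ j ∈ s, f j x ≤ f i x := fun j hj =>
            le_trans (Finset.le_sup' (fun j => f j x) hj) heq'.le
          have hd0 : f' i x ≤ 0 := hsign x hx0 i hi hmax
          have hev' : ∀ᶠ z in 𝓝[>] x, slope (f i) x z < r :=
            hslope.eventually_lt_const (lt_of_le_of_lt hd0 hr)
          refine hev'.mono fun z hz => ?_
          rw [slope_def_field] at hz
          rw [heq']
          exact hz
        · -- non-maximizer : tends to -∞
          have hbot : Tendsto (fun z => (f i z - Mx x) / (z - x)) (𝓝[>] x) atBot := by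
            have hdecomp : ∀ᶠ z in 𝓝[>] x, slope (f i) x z + (f i x - Mx x) * (z - x)⁻¹
                = (f i z - Mx x) / (z - x) := by
              filter_upwards [self_mem_nhdsWithin] with z hz
              have hzx : z - x ≠ 0 := sub_ne_zero.2 (ne_of_gt hz)
              rw [slope_def_field]
              field_simp
              ring
            rw [← tendsto_congr' hdecomp]
            have h1 : Tendsto (fun z => (f i x - Mx x) * (z - x)⁻¹) (𝓝[>] x) atBot := by
              have hsub : Tendsto (fun z : ℝ => z - x) (𝓝[>] x) (𝓝[>] 0) := by
                apply tendsto_nhdsWithin_of_tendsto_nhds_of_eventually_within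
                · have : Tendsto (fun z : ℝ => z - x) (𝓝 x) (𝓝 (x - x)) :=
                    (continuous_id.sub continuous_const).tendsto x
                  simpa using this.mono_left nhdsWithin_le_nhds
                · filter_upwards [self_mem_nhdsWithin] with z hz
                  exact sub_pos.2 (Set.mem_Ioi.1 hz)
              have hinv : Tendsto (fun z => (z - x)⁻¹) (𝓝[>] x) atTop :=
                tendsto_inv_nhdsGT_zero.comp hsub
              exact (tendsto_const_mul_atBot_of_neg (sub_neg.2 hlt)).2 hinv
            exact tendsto_atBot_add_left_of_ge' (l := 𝓝[>] x) (f' i x + 1)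
              (hslope.eventually_le_const (lt_add_one _)) h1
          exact hbot.eventually (eventually_lt_atBot r)
      have hall : ∀ᶠ z in 𝓝[>] x, ∀ i ∈ s, (f i z - Mx x) / (z - x) < r :=
        (eventually_all_finset s).2 hev
      apply Filter.Eventually.frequently
      filter_upwards [hall, self_mem_nhdsWithin] with z hz hz'
      obtain ⟨i, hi, hMz⟩ := Finset.exists_mem_eq_sup' hs (fun j => f j z)
      rw [slope_def_field]
      calc (Mx z - Mx x) / (z - x) = (f i z - Mx x) / (z - x) := by
            rw [show Mx z = f i z from hMz]
        _ < r := hz i hi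
    · exact (continuous_const.add (continuous_const.mul continuous_id)).continuousOn
    · intro x hx
      simpa using ((hasDerivWithinAt_id x (Set.Ici x)).const_mul ε).const_add (Mx 0)
    · intro x hx _
      exact hε
  -- let ε → 0
  have hfin : ∀ δ > 0, Mx T ≤ Mx 0 + δ := by
    intro δ hδ
    have hε : δ / (T + 1) > 0 := div_pos hδ (by linarith [hT.out])
    have := key _ hε
    have hle : δ / (T + 1) * T ≤ δ := by
      rw [div_mul_eq_mul_div, div_le_iff₀ (by linarith [hT.out])]
      nlinarith [hT.out, hδ]
    linarith
  exact le_of_forall_pos_le_add hfin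

end MaxPrinciple

/-- The time derivative `∂ₜ u_h(x,t) = (H_h u_h(·,t))(x)` of the solution of the
discrete HJE is controlled by the discrete Hamiltonian of the initial datum. -/
theorem discrete_HJE_time_derivative_bound
    {N M : ℕ} (hN : 0 < N) (hM : 0 < M)
    (h : ℝ) (hh : 0 < h)
    (Ω : Set (Fin N → ℝ)) (hΩo : IsOpen Ω) (hΩne : Ω.Nonempty)
    (hΩbd : Bornology.IsBounded Ω)
    (hΩpos : closure Ω ⊆ {x : Fin N → ℝ | ∀ k, 0 < x k})
    (ν : Fin M → Fin N → ℤ)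
    (Φp Φm : Fin M → (Fin N → ℝ) → ℝ)
    (hΦpc : ∀ j, ContinuousOn (Φp j) (closure Ω))
    (hΦmc : ∀ j, ContinuousOn (Φm j) (closure Ω))
    (hΦp0 : ∀ j, ∀ x ∈ closure Ω, 0 ≤ Φp j x)
    (hΦm0 : ∀ j, ∀ x ∈ closure Ω, 0 ≤ Φm j x)
    (Ωh : Finset (Fin N → ℝ))
    (hΩh : ∀ x : Fin N → ℝ,
      x ∈ Ωh ↔ ((∃ i : Fin N → ℕ, ∀ k, x k = (i k : ℝ) * h) ∧ x ∈ closure Ω))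
    (hne : Ωh.Nonempty)
    (u0 : (Fin N → ℝ) → ℝ) (u : (Fin N → ℝ) → ℝ → ℝ)
    (hu : solvesDHJ h Ωh ν Φp Φm u0 u) :
    ∀ x ∈ Ωh, ∀ t ∈ Set.Ici (0:ℝ),
      |discHam h Ωh ν Φp Φm (fun y => u y t) x|
        ≤ Ωh.sup' hne (fun y => |discHam h Ωh ν Φp Φm u0 y|) := by
  obtain ⟨hu0, huD, _⟩ := hu
  -- the time derivative of the solution
  set w : (Fin N → ℝ) → ℝ → ℝ := fun x t => discHam h Ωh ν Φp Φm (fun y => u y t) x with hwdef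
  -- the derivative of `w` in time
  set w' : (Fin N → ℝ) → ℝ → ℝ := fun x t => ∑ j : Fin M,
    ((if shiftPt h x (ν j) ∈ Ωh then
        Φp j x * (Real.exp ((u (shiftPt h x (ν j)) t - u x t) / h)
          * ((w (shiftPt h x (ν j)) t - w x t) / h)) else 0)
      + (if shiftPt h x (-(ν j)) ∈ Ωh then
        Φm j x * (Real.exp ((u (shiftPt h x (-(ν j))) t - u x t) / h)
          * ((w (shiftPt h x (-(ν j))) t - w x t) / h)) else 0)) with hw'def
  have hxcl : ∀ x ∈ Ωh, x ∈ closure Ω := fun x hx => ((hΩh x).1 hx).2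
  -- `w x` is differentiable with derivative `w' x`
  have hW : ∀ x ∈ Ωh, ∀ t ∈ Set.Ici (0:ℝ), HasDerivWithinAt (w x) (w' x t) (Set.Ici 0) t := by
    intro x hx t ht
    show HasDerivWithinAt
      (fun s => ∑ j : Fin M,
        ((if shiftPt h x (ν j) ∈ Ωh then
            Φp j x * (Real.exp ((u (shiftPt h x (ν j)) s - u x s) / h) - 1) else 0)
          + (if shiftPt h x (-(ν j)) ∈ Ωh then
            Φm j x * (Real.exp ((u (shiftPt h x (-(ν j))) s - u x s) / h) - 1) else 0)))
      (w' x t) (Set.Ici 0) t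
    apply HasDerivWithinAt.fun_sum
    intro j _
    apply HasDerivWithinAt.add
    · by_cases hj : shiftPt h x (ν j) ∈ Ωh
      · simp only [hj, if_true]
        exact ((((huD _ hj t ht).sub (huD x hx t ht)).div_const h).exp.sub_const 1).const_mul
          (Φp j x)
      · simp only [hj, if_false]
        exact hasDerivWithinAt_const t _ 0
    · by_cases hj : shiftPt h x (-(ν j)) ∈ Ωh
      · simp only [hj, if_true]
        exact ((((huD _ hj t ht).sub (huD x hx t ht)).div_const h).exp.sub_const 1).const_mul
          (Φm j x)
      · simp only [hj, if_false]
        exact hasDerivWithinAt_const t _ 0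
  -- sign of `w'` at extremal points
  have hsign_max : ∀ t ∈ Set.Ici (0:ℝ), ∀ x ∈ Ωh,
      (∀ y ∈ Ωh, w y t ≤ w x t) → w' x t ≤ 0 := by
    intro t ht x hx hmax
    apply Finset.sum_nonpos
    intro j _
    have key : ∀ (Φ : ℝ) (y : Fin N → ℝ), 0 ≤ Φ → y ∈ Ωh →
        Φ * (Real.exp ((u y t - u x t) / h) * ((w y t - w x t) / h)) ≤ 0 := by
      intro Φ y hΦ hy
      apply mul_nonpos_of_nonneg_of_nonpos hΦ
      apply mul_nonpos_of_nonneg_of_nonpos (Real.exp_pos _).le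
      exact div_nonpos_of_nonpos_of_nonneg (sub_nonpos.2 (hmax y hy)) hh.le
    apply add_nonpos
    · split_ifs with hj
      · exact key _ _ (hΦp0 j x (hxcl x hx)) hj
      · exact le_refl 0
    · split_ifs with hj
      · exact key _ _ (hΦm0 j x (hxcl x hx)) hj
      · exact le_refl 0
  have hsign_min : ∀ t ∈ Set.Ici (0:ℝ), ∀ x ∈ Ωh,
      (∀ y ∈ Ωh, w x t ≤ w y t) → 0 ≤ w' x t := by
    intro t ht x hx hmin
    apply Finset.sum_nonneg
    intro j _
    have key : ∀ (Φ : ℝ) (y : Fin N → ℝ), 0 ≤ Φ → y ∈ Ωh →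
        0 ≤ Φ * (Real.exp ((u y t - u x t) / h) * ((w y t - w x t) / h)) := by
      intro Φ y hΦ hy
      apply mul_nonneg hΦ
      apply mul_nonneg (Real.exp_pos _).le
      exact div_nonneg (sub_nonneg.2 (hmin y hy)) hh.le
    apply add_nonneg
    · split_ifs with hj
      · exact key _ _ (hΦp0 j x (hxcl x hx)) hj
      · exact le_refl 0
    · split_ifs with hj
      · exact key _ _ (hΦm0 j x (hxcl x hx)) hj
      · exact le_refl 0
  -- maximum and minimum principles
  have hMmax := maxPrinciple_aux Ωh hne w w' hW hsign_max
  have hMmin := maxPrinciple_aux Ωh hne (fun x t => -(w x t)) (fun x t => -(w' x t))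
    (fun x hx t ht => (hW x hx t ht).neg)
    (by
      intro t ht x hx hmax
      have : ∀ y ∈ Ωh, w x t ≤ w y t := fun y hy => neg_le_neg_iff.1 (hmax y hy)
      exact neg_nonpos.2 (hsign_min t ht x hx this))
  -- value at time 0
  have hinit : ∀ x ∈ Ωh, w x 0 = discHam h Ωh ν Φp Φm u0 x := by
    intro x hx
    show discHam h Ωh ν Φp Φm (fun y => u y 0) x = discHam h Ωh ν Φp Φm u0 x
    unfold discHam
    apply Finset.sum_congr rfl
    intro j _
    congr 1
    · split_ifs with hj
      · simp only [hu0 _ hj, hu0 _ hx]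
      · rfl
    · split_ifs with hj
      · simp only [hu0 _ hj, hu0 _ hx]
      · rfl
  intro x hx t ht
  set B := Ωh.sup' hne (fun y => |discHam h Ωh ν Φp Φm u0 y|) with hB
  show |w x t| ≤ B
  have hub : Ωh.sup' hne (fun y => w y 0) ≤ B := by
    apply Finset.sup'_le
    intro y hy
    calc w y 0 = discHam h Ωh ν Φp Φm u0 y := hinit y hy
      _ ≤ |discHam h Ωh ν Φp Φm u0 y| := le_abs_self _
      _ ≤ B := by rw [hB]; exact Finset.le_sup' (fun y => |discHam h Ωh ν Φp Φm u0 y|) hy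
  have hlb : Ωh.sup' hne (fun y => -(w y 0)) ≤ B := by
    apply Finset.sup'_le
    intro y hy
    calc -(w y 0) = -(discHam h Ωh ν Φp Φm u0 y) := by rw [hinit y hy]
      _ ≤ |discHam h Ωh ν Φp Φm u0 y| := neg_le_abs _
      _ ≤ B := by rw [hB]; exact Finset.le_sup' (fun y => |discHam h Ωh ν Φp Φm u0 y|) hy
  rw [abs_le]
  constructor
  · have h1 : -(w x t) ≤ Ωh.sup' hne (fun y => -(w y t)) :=
      Finset.le_sup' (fun y => -(w y t)) hx
    have h2 := hMmin t ht
    linarith [le_trans (le_trans h1 h2) hlb]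
  · have h1 : w x t ≤ Ωh.sup' hne (fun y => w y t) :=
      Finset.le_sup' (fun y => w y t) hx
    have h2 := hMmax t ht
    linarith [le_trans (le_trans h1 h2) hub]
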